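/- Convergence of the cutting-plane gap (Theorem 1, abstract form): let B ⊆ ℝ^m be a bounded set, let F : ℝ^m → ℝ be concave and differentiable with ‖∇F(z)‖ ≤ M for all z ∈ B, and let (z_N)_{N∈ℕ} and (ẑ_N)_{N∈ℕ} be sequences in B such that for all N and all ℓ ≥ 1 the later iterate satisfies the cut: ⟨∇F(z_N), z_{N+ℓ} − ẑ_N⟩ ≥ 0. Define the gap ε_N = F(ẑ_N) − F(z_N). Then for every ε > 0 there exists N with ε_N < ε; in particular if ε_N ≥ 0 for all N then inf_N ε_N = 0. -/

import Mathlib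

open scoped RealInnerProductSpace

noncomputable section

/-- Gradient inequality for concave differentiable functions. -/
lemma concave_gradient_ineq {E : Type*} [NormedAddCommGroup E] [InnerProductSpace ℝ E]
    [CompleteSpace E] {F : E → ℝ} (hF : ConcaveOn ℝ Set.univ F) (hdiff : Differentiable ℝ F)
    (x y : E) : F y ≤ F x + ⟪gradient F x, y - x⟫ := by
  set v := y - x with hv
  have hline : HasDerivAt (fun t : ℝ => x + t • v) v 0 := by
    simpa using ((hasDerivAt_id (0:ℝ)).smul_const v).const_add x
  have hgrad : HasFDerivAt F ((InnerProductSpace.toDual ℝ E) (gradient F x)) x :=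
    (hasGradientAt_iff_hasFDerivAt.mp (hdiff x).hasGradientAt)
  have hcomp : HasDerivAt (fun t : ℝ => -F (x + t • v)) (-⟪gradient F x, v⟫) 0 := by
    have hgrad2 : HasFDerivAt F ((InnerProductSpace.toDual ℝ E) (gradient F x))
        (x + (0:ℝ) • v) := by simpa using hgrad
    have h1 := hgrad2.comp_hasDerivAt (0:ℝ) hline
    have h2 := h1.neg
    simp only [InnerProductSpace.toDual_apply_apply] at h2
    exact h2
  have hgc : ConvexOn ℝ Set.univ (fun t : ℝ => -F (x + t • v)) := by
    have h := (hF.neg).comp_affineMap (AffineMap.lineMap x y : ℝ →ᵃ[ℝ] E)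
    have he : ((-F) ∘ (AffineMap.lineMap x y : ℝ →ᵃ[ℝ] E)) =
        fun t : ℝ => -F (x + t • v) := by
      funext t
      simp only [Function.comp_apply, AffineMap.lineMap_apply, Pi.neg_apply, hv,
        vsub_eq_sub, vadd_eq_add]
      rw [add_comm]
    rw [he] at h
    simpa using h
  have := hgc.le_slope_of_hasDerivAt (Set.mem_univ (0:ℝ)) (Set.mem_univ 1) zero_lt_one hcomp
  simp [slope] at this
  have hxy : x + v = y := by rw [hv]; abel
  rw [hxy] at this
  simpa using this

/-- A sequence in a bounded set of Euclidean space cannot be uniformly separated. -/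
lemma no_separated_seq (m : ℕ) (B : Set (EuclideanSpace ℝ (Fin m)))
    (hB : Bornology.IsBounded B)
    (w : ℕ → EuclideanSpace ℝ (Fin m)) (hw : ∀ N, w N ∈ B) (δ : ℝ) (hδ : 0 < δ)
    (hsep : ∀ N ℓ, 1 ≤ ℓ → δ ≤ ‖w (N + ℓ) - w N‖) : False := by
  have hcpt : IsCompact (closure B) := hB.isCompact_closure
  obtain ⟨a, -, φ, hφ, hlim⟩ := hcpt.tendsto_subseq (fun N => subset_closure (hw N))
  have hc : CauchySeq (w ∘ φ) := hlim.cauchySeq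
  obtain ⟨n0, hn0⟩ := Metric.cauchySeq_iff'.mp hc δ hδ
  have h1 := hn0 (n0 + 1) (Nat.le_succ n0)
  have hlt : φ n0 < φ (n0 + 1) := hφ (Nat.lt_succ_self n0)
  have : δ ≤ ‖w (φ n0 + (φ (n0+1) - φ n0)) - w (φ n0)‖ :=
    hsep (φ n0) (φ (n0+1) - φ n0) (Nat.one_le_iff_ne_zero.mpr (by omega))
  rw [Nat.add_sub_cancel' hlt.le] at this
  rw [show w (φ (n0+1)) - w (φ n0) = (w ∘ φ) (n0+1) - (w ∘ φ) n0 from rfl] at this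
  rw [← dist_eq_norm] at this
  rw [show ((w ∘ φ) (n0+1)) = w (φ (n0+1)) from rfl,
    show ((w ∘ φ) n0) = w (φ n0) from rfl, dist_comm] at this
  simp only [Function.comp_apply] at h1
  rw [dist_comm] at h1
  linarith

/-- Convergence of the cutting-plane gap (Theorem 1, abstract form): for a bounded set
`B ⊆ ℝ^m`, a concave differentiable `F` with gradient norm bounded by `M` on `B`, and
sequences `(z_N)`, `(ẑ_N)` in `B` such that every later iterate satisfies the cut
`⟨∇F(z_N), z_{N+ℓ} − ẑ_N⟩ ≥ 0`, the gap `ε_N = F(ẑ_N) − F(z_N)` drops below every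
`ε > 0`; in particular if `ε_N ≥ 0` for all `N`, then `inf_N ε_N = 0`. -/
theorem cutting_plane_gap_convergence (m : ℕ) (B : Set (EuclideanSpace ℝ (Fin m)))
    (hB : Bornology.IsBounded B)
    (F : EuclideanSpace ℝ (Fin m) → ℝ)
    (hF : ConcaveOn ℝ Set.univ F) (hdiff : Differentiable ℝ F)
    (M : ℝ) (hM : ∀ z ∈ B, ‖gradient F z‖ ≤ M)
    (z zhat : ℕ → EuclideanSpace ℝ (Fin m))
    (hzB : ∀ N, z N ∈ B) (hzhatB : ∀ N, zhat N ∈ B)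
    (hcut : ∀ N ℓ, 1 ≤ ℓ → 0 ≤ ⟪gradient F (z N), z (N + ℓ) - zhat N⟫) :
    (∀ ε > 0, ∃ N, F (zhat N) - F (z N) < ε) ∧
    ((∀ N, 0 ≤ F (zhat N) - F (z N)) → (⨅ N, (F (zhat N) - F (z N))) = 0) := by
  have part1 : ∀ ε > 0, ∃ N, F (zhat N) - F (z N) < ε := by
    by_contra h
    push_neg at h
    obtain ⟨ε, hε, hall⟩ := h
    -- gradient inequality gives ε ≤ ⟪∇F(z N), ẑ N - z N⟫
    have hgi : ∀ N, ε ≤ ⟪gradient F (z N), zhat N - z N⟫ := by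
      intro N
      have := concave_gradient_ineq hF hdiff (z N) (zhat N)
      have h2 := hall N
      linarith
    -- for every ℓ ≥ 1, ε ≤ M * ‖z (N+ℓ) - z N‖
    have key : ∀ N ℓ, 1 ≤ ℓ → ε ≤ M * ‖z (N + ℓ) - z N‖ := by
      intro N ℓ hℓ
      have hsum : ⟪gradient F (z N), z (N + ℓ) - z N⟫ =
          ⟪gradient F (z N), z (N + ℓ) - zhat N⟫ + ⟪gradient F (z N), zhat N - z N⟫ := by
        rw [← inner_add_right]
        congr 1
        abel
      have h1 : ε ≤ ⟪gradient F (z N), z (N + ℓ) - z N⟫ := by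
        rw [hsum]
        have := hcut N ℓ hℓ
        have := hgi N
        linarith
      have h2 : ⟪gradient F (z N), z (N + ℓ) - z N⟫ ≤
          ‖gradient F (z N)‖ * ‖z (N + ℓ) - z N‖ := real_inner_le_norm _ _
      have h3 : ‖gradient F (z N)‖ * ‖z (N + ℓ) - z N‖ ≤ M * ‖z (N + ℓ) - z N‖ :=
        mul_le_mul_of_nonneg_right (hM _ (hzB N)) (norm_nonneg _)
      linarith
    -- hence M > 0 and the iterates are (ε/M)-separated
    have hM0 : 0 < M := by
      have h0 := key 0 1 le_rfl
      nlinarith [norm_nonneg (z (0 + 1) - z 0)]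
    exact no_separated_seq m B hB z hzB (ε / M) (div_pos hε hM0)
      (fun N ℓ hℓ => (div_le_iff₀ hM0).mpr (by rw [mul_comm]; exact key N ℓ hℓ))
  refine ⟨part1, fun hnn => ?_⟩
  have hbdd : BddBelow (Set.range fun N => F (zhat N) - F (z N)) := by
    refine ⟨0, ?_⟩
    rintro x ⟨N, rfl⟩
    exact hnn N
  refine le_antisymm ?_ (le_ciInf hnn)
  refine le_of_forall_pos_le_add ?_
  intro ε hε
  obtain ⟨N, hN⟩ := part1 ε hε
  calc (⨅ N, (F (zhat N) - F (z N))) ≤ F (zhat N) - F (z N) := ciInf_le hbdd N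
    _ ≤ 0 + ε := by linarith
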